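/- Let N be a positive integer, a, b ∈ ℝ^N, and let Π_N be the group of permutations of {1, ..., N} equipped with the uniform probability measure; expectation is denoted E. Define f(σ) = |Σ_{i=1}^N a_{σ(i)} b_i|. Then for every real p ≥ 2, (E |f|^p)^{1/p} ≤ E |f| + 4 √p · √N · ‖a‖_∞ ‖b‖_∞ ≤ (E |f|²)^{1/2} + 4 √p · √N · ‖a‖_∞ ‖b‖_∞. -/

import Mathlib

open Finset

private lemma geom_bound (x y : ℝ) (k : ℕ) :
    (x - y) * (x ^ (2*k+1) - y ^ (2*k+1)) ≤
      (2*(k:ℝ)+1) * ((x - y)^2 * (x^(2*k) + y^(2*k))) := by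
  have h := geom_sum₂_mul x y (2*k+1)
  have hterm : ∀ i ∈ Finset.range (2*k+1), x ^ i * y ^ (2*k+1-1-i) ≤ x^(2*k)+y^(2*k) := by
    intro i hi
    have hi' : i ≤ 2*k := Nat.lt_succ_iff.mp (Finset.mem_range.mp hi)
    have h1 : x ^ i * y ^ (2*k+1-1-i) ≤ |x ^ i * y ^ (2*k+1-1-i)| := le_abs_self _
    have h2 : |x ^ i * y ^ (2*k+1-1-i)| = |x| ^ i * |y| ^ (2*k-i) := by
      rw [abs_mul, abs_pow, abs_pow]
      norm_num
    have hM : |x| ^ i * |y| ^ (2*k-i) ≤ (max |x| |y|) ^ i * (max |x| |y|) ^ (2*k-i) := by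
      apply mul_le_mul (pow_le_pow_left₀ (abs_nonneg _) (le_max_left _ _) i)
        (pow_le_pow_left₀ (abs_nonneg _) (le_max_right _ _) _) (by positivity) (by positivity)
    have hMk : (max |x| |y|) ^ i * (max |x| |y|) ^ (2*k-i) = (max |x| |y|) ^ (2*k) := by
      rw [← pow_add]
      congr 1
      omega
    have hfin : (max |x| |y|) ^ (2*k) ≤ x^(2*k) + y^(2*k) := by
      rcases max_cases |x| |y| with ⟨hm, _⟩ | ⟨hm, _⟩ <;> rw [hm]
      · rw [Even.pow_abs (even_two_mul k)]
        nlinarith [Even.pow_nonneg (even_two_mul k) y]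
      · rw [Even.pow_abs (even_two_mul k)]
        nlinarith [Even.pow_nonneg (even_two_mul k) x]
    calc x ^ i * y ^ (2*k+1-1-i) ≤ |x| ^ i * |y| ^ (2*k-i) := h1.trans (le_of_eq h2)
      _ ≤ (max |x| |y|) ^ (2*k) := hM.trans (le_of_eq hMk)
      _ ≤ x^(2*k) + y^(2*k) := hfin
  have hG : ∑ i ∈ Finset.range (2*k+1), x ^ i * y ^ (2*k+1-1-i) ≤
      (2*(k:ℝ)+1) * (x^(2*k)+y^(2*k)) := by
    calc ∑ i ∈ Finset.range (2*k+1), x ^ i * y ^ (2*k+1-1-i)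
        ≤ ∑ _i ∈ Finset.range (2*k+1), (x^(2*k)+y^(2*k)) := Finset.sum_le_sum hterm
      _ = (2*(k:ℝ)+1) * (x^(2*k)+y^(2*k)) := by
          rw [Finset.sum_const, Finset.card_range, nsmul_eq_mul]
          push_cast; ring
  have hxy2 : (0:ℝ) ≤ (x - y)^2 := sq_nonneg _
  calc (x - y) * (x ^ (2*k+1) - y ^ (2*k+1))
      = (∑ i ∈ Finset.range (2*k+1), x ^ i * y ^ (2*k+1-1-i)) * (x-y)^2 := by
        rw [← h]; ring
    _ ≤ ((2*(k:ℝ)+1) * (x^(2*k)+y^(2*k))) * (x-y)^2 :=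
        mul_le_mul_of_nonneg_right hG hxy2
    _ = (2*(k:ℝ)+1) * ((x - y)^2 * (x^(2*k) + y^(2*k))) := by ring



private lemma sum_perm_mul_right {N : ℕ} (τ : Equiv.Perm (Fin N)) (F : Equiv.Perm (Fin N) → ℝ) :
    ∑ σ : Equiv.Perm (Fin N), F (σ * τ) = ∑ σ : Equiv.Perm (Fin N), F σ :=
  Fintype.sum_equiv (Equiv.mulRight τ) _ _ fun _ => rfl

private lemma perm_exchange {N : ℕ} (i j : Fin N)
    (F : Equiv.Perm (Fin N) → Equiv.Perm (Fin N) → ℝ) :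
    ∑ σ : Equiv.Perm (Fin N), F σ (σ * Equiv.swap i j) =
      ∑ σ : Equiv.Perm (Fin N), F (σ * Equiv.swap i j) σ := by
  have h := sum_perm_mul_right (Equiv.swap i j) (fun σ => F σ (σ * Equiv.swap i j))
  rw [← h]
  refine Finset.sum_congr rfl fun σ _ => ?_
  simp only [mul_assoc, Equiv.swap_mul_self, mul_one]

section main
variable {N : ℕ} (α β : Fin N → ℝ)

private def Tf (α β : Fin N → ℝ) (σ : Equiv.Perm (Fin N)) : ℝ := ∑ i, β i * α (σ i)

private lemma Tf_sub (σ : Equiv.Perm (Fin N)) (i j : Fin N) :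
    Tf α β σ - Tf α β (σ * Equiv.swap i j) = (β i - β j) * (α (σ i) - α (σ j)) := by
  have h1 : Tf α β (σ * Equiv.swap i j) = ∑ i', β (Equiv.swap i j i') * α (σ i') := by
    have h2 := Equiv.sum_comp (Equiv.swap i j) (fun i' => β (Equiv.swap i j i') * α (σ i'))
    simp only [Equiv.swap_apply_self] at h2
    rw [← h2]
    rfl
  rw [h1]
  unfold Tf
  rw [← Finset.sum_sub_distrib]
  have hterm : ∀ i', β i' * α (σ i') - β (Equiv.swap i j i') * α (σ i') =
      (β i' - β (Equiv.swap i j i')) * α (σ i') := fun i' => by ring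
  simp only [hterm]
  by_cases hij : i = j
  · subst hij
    simp [Equiv.swap_self]
  · rw [← Finset.sum_subset (Finset.subset_univ ({i, j} : Finset (Fin N)))
      (fun x _ hx => ?_)]
    · rw [Finset.sum_pair hij, Equiv.swap_apply_left, Equiv.swap_apply_right]
      ring
    · simp only [Finset.mem_insert, Finset.mem_singleton, not_or] at hx
      rw [Equiv.swap_apply_of_ne_of_ne hx.1 hx.2]
      ring

private lemma Dsum (hα0 : ∑ i, α i = 0) (hβ0 : ∑ i, β i = 0) (σ : Equiv.Perm (Fin N)) :
    ∑ i, ∑ j, (β i - β j) * (α (σ i) - α (σ j)) = 2 * N * Tf α β σ := by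
  have hsumα : ∑ i, α (σ i) = 0 := (Equiv.sum_comp σ α).trans hα0
  have inner : ∀ i, ∑ j, (β i - β j) * (α (σ i) - α (σ j)) =
      N * (β i * α (σ i)) + Tf α β σ := by
    intro i
    have expand : ∀ j, (β i - β j) * (α (σ i) - α (σ j)) =
        β i * α (σ i) - β i * α (σ j) - α (σ i) * β j + β j * α (σ j) := fun j => by ring
    simp only [expand]
    rw [Finset.sum_add_distrib, Finset.sum_sub_distrib, Finset.sum_sub_distrib,
      Finset.sum_const, ← Finset.mul_sum, ← Finset.mul_sum, hsumα, hβ0,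
      Finset.card_univ, Fintype.card_fin, nsmul_eq_mul]
    unfold Tf
    ring
  simp only [inner]
  rw [Finset.sum_add_distrib, Finset.sum_const, ← Finset.mul_sum, Finset.card_univ,
    Fintype.card_fin, nsmul_eq_mul]
  unfold Tf
  ring

end main

private lemma moment_bound {N : ℕ} (hN : 0 < N) (α β : Fin N → ℝ) (CA CB : ℝ)
    (hCA : 0 ≤ CA) (hCB : 0 ≤ CB)
    (hα0 : ∑ i, α i = 0) (hβ0 : ∑ i, β i = 0)
    (hα2 : ∑ i, (α i)^2 ≤ N * CA^2)
    (hβd : ∀ i j, (β i - β j)^2 ≤ 4 * CB^2) (k : ℕ) :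
    ∑ σ : Equiv.Perm (Fin N), (Tf α β σ) ^ (2*k) ≤
      (8 * (N:ℝ) * CA^2 * CB^2 * (k:ℝ)) ^ k * (Fintype.card (Equiv.Perm (Fin N)) : ℝ) := by
  set T := Tf α β with hT
  set D : Equiv.Perm (Fin N) → Fin N → Fin N → ℝ :=
    fun σ i j => (β i - β j) * (α (σ i) - α (σ j)) with hD
  have hNr : (0:ℝ) < N := by exact_mod_cast hN
  -- D² bound
  have hD2 : ∀ σ, ∑ i, ∑ j, (D σ i j)^2 ≤ 8*(N:ℝ)^2*CA^2*CB^2 := by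
    intro σ
    have hsumα : ∑ i, α (σ i) = 0 := (Equiv.sum_comp σ α).trans hα0
    have hsumα2 : ∑ i, (α (σ i))^2 ≤ N * CA^2 :=
      le_of_le_of_eq (le_of_eq (Equiv.sum_comp σ (fun t => (α t)^2))) rfl |>.trans hα2
    have step : ∀ i j, (D σ i j)^2 ≤ 4*CB^2 * (α (σ i) - α (σ j))^2 := by
      intro i j
      have h2 : (D σ i j)^2 = (β i - β j)^2 * (α (σ i) - α (σ j))^2 := by
        simp only [hD]; ring
      rw [h2]
      exact mul_le_mul_of_nonneg_right (hβd i j) (sq_nonneg _)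
    have hexp : ∑ i, ∑ j, (α (σ i) - α (σ j))^2 ≤ 2*(N:ℝ)^2*CA^2 := by
      have inner : ∀ i : Fin N, ∑ j, (α (σ i) - α (σ j))^2 =
          N * (α (σ i))^2 - 2*α (σ i)*(∑ j, α (σ j)) + ∑ j, (α (σ j))^2 := by
        intro i
        have e : ∀ j : Fin N, (α (σ i) - α (σ j))^2 =
            (α (σ i))^2 - (2*α (σ i))*α (σ j) + (α (σ j))^2 := fun j => by ring
        simp only [e]
        rw [Finset.sum_add_distrib, Finset.sum_sub_distrib, Finset.sum_const,
          ← Finset.mul_sum, Finset.card_univ, Fintype.card_fin, nsmul_eq_mul]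
      simp only [inner, hsumα]
      rw [Finset.sum_add_distrib, Finset.sum_sub_distrib, ← Finset.mul_sum,
        Finset.sum_const, Finset.card_univ, Fintype.card_fin, nsmul_eq_mul]
      simp only [mul_zero, Finset.sum_const_zero]
      nlinarith [hsumα2]
    calc ∑ i, ∑ j, (D σ i j)^2 ≤ ∑ i, ∑ j, 4*CB^2 * (α (σ i) - α (σ j))^2 :=
          Finset.sum_le_sum fun i _ => Finset.sum_le_sum fun j _ => step i j
      _ = 4*CB^2 * ∑ i, ∑ j, (α (σ i) - α (σ j))^2 := by
          simp only [← Finset.mul_sum]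
      _ ≤ 4*CB^2 * (2*(N:ℝ)^2*CA^2) := by
          apply mul_le_mul_of_nonneg_left hexp (by positivity)
      _ = 8*(N:ℝ)^2*CA^2*CB^2 := by ring
  -- recursion
  have key : ∀ k : ℕ, ∑ σ : Equiv.Perm (Fin N), T σ ^ (2*k+2) ≤
      (4*(2*(k:ℝ)+1)*((N:ℝ)*CA^2*CB^2)) * ∑ σ : Equiv.Perm (Fin N), T σ ^ (2*k) := by
    intro k
    have per1 : ∀ σ, ∑ i, ∑ j, D σ i j * T σ ^ (2*k+1) = 2*(N:ℝ)* T σ^(2*k+2) := by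
      intro σ
      simp only [← Finset.sum_mul]
      rw [Dsum α β hα0 hβ0 σ]
      ring
    have A1 : ∑ σ : Equiv.Perm (Fin N), ∑ i, ∑ j, D σ i j * T σ ^ (2*k+1)
        = 2*(N:ℝ)*∑ σ : Equiv.Perm (Fin N), T σ^(2*k+2) := by
      rw [Finset.sum_congr rfl fun σ _ => per1 σ, ← Finset.mul_sum]
    have per2 : ∀ (i j : Fin N), ∑ σ : Equiv.Perm (Fin N),
        D σ i j * T (σ * Equiv.swap i j) ^ (2*k+1)
        = - ∑ σ : Equiv.Perm (Fin N), D σ i j * T σ ^ (2*k+1) := by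
      intro i j
      have h := perm_exchange i j (fun x y => (T x - T y) * T y ^ (2*k+1))
      calc ∑ σ : Equiv.Perm (Fin N), D σ i j * T (σ * Equiv.swap i j) ^ (2*k+1)
          = ∑ σ : Equiv.Perm (Fin N),
              (T σ - T (σ * Equiv.swap i j)) * T (σ * Equiv.swap i j) ^ (2*k+1) :=
            Finset.sum_congr rfl fun σ _ => by rw [Tf_sub α β σ i j]
        _ = ∑ σ : Equiv.Perm (Fin N), (T (σ * Equiv.swap i j) - T σ) * T σ ^ (2*k+1) := h
        _ = ∑ σ : Equiv.Perm (Fin N), -(D σ i j * T σ ^ (2*k+1)) := by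
            refine Finset.sum_congr rfl fun σ _ => ?_
            rw [show D σ i j = T σ - T (σ * Equiv.swap i j) from (Tf_sub α β σ i j).symm]
            ring
        _ = - ∑ σ : Equiv.Perm (Fin N), D σ i j * T σ ^ (2*k+1) := Finset.sum_neg_distrib _
    have e1 : ∀ (G : Equiv.Perm (Fin N) → Fin N → Fin N → ℝ),
        ∑ σ : Equiv.Perm (Fin N), ∑ i, ∑ j, G σ i j
          = ∑ i, ∑ j, ∑ σ : Equiv.Perm (Fin N), G σ i j := by
      intro G
      rw [Finset.sum_comm]
      exact Finset.sum_congr rfl fun i _ => Finset.sum_comm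
    have A2 : ∑ σ : Equiv.Perm (Fin N), ∑ i, ∑ j, D σ i j * T (σ * Equiv.swap i j) ^ (2*k+1)
        = -∑ σ : Equiv.Perm (Fin N), ∑ i, ∑ j, D σ i j * T σ ^ (2*k+1) := by
      rw [e1, e1, ← Finset.sum_neg_distrib]
      refine Finset.sum_congr rfl fun i _ => ?_
      rw [← Finset.sum_neg_distrib]
      exact Finset.sum_congr rfl fun j _ => per2 i j
    have A3 : ∑ σ : Equiv.Perm (Fin N), ∑ i, ∑ j,
        D σ i j * (T σ ^ (2*k+1) - T (σ * Equiv.swap i j) ^ (2*k+1))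
        = 4*(N:ℝ)*∑ σ : Equiv.Perm (Fin N), T σ^(2*k+2) := by
      simp only [mul_sub, Finset.sum_sub_distrib]
      rw [A1, A2, A1]
      ring
    -- pointwise bound
    have hptw : ∀ (σ : Equiv.Perm (Fin N)) (i j : Fin N),
        D σ i j * (T σ ^ (2*k+1) - T (σ * Equiv.swap i j) ^ (2*k+1)) ≤
        (2*(k:ℝ)+1) * ((D σ i j)^2 * (T σ^(2*k) + T (σ * Equiv.swap i j)^(2*k))) := by
      intro σ i j
      have h := geom_bound (T σ) (T (σ * Equiv.swap i j)) k
      rw [Tf_sub α β σ i j] at h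
      exact h
    have B2 : ∑ σ : Equiv.Perm (Fin N), ∑ i, ∑ j, (D σ i j)^2 * T (σ * Equiv.swap i j)^(2*k)
        = ∑ σ : Equiv.Perm (Fin N), ∑ i, ∑ j, (D σ i j)^2 * T σ^(2*k) := by
      rw [e1, e1]
      refine Finset.sum_congr rfl fun i _ => Finset.sum_congr rfl fun j _ => ?_
      have h := perm_exchange i j (fun x y => (T x - T y)^2 * T y ^ (2*k))
      calc ∑ σ : Equiv.Perm (Fin N), (D σ i j)^2 * T (σ * Equiv.swap i j)^(2*k)
          = ∑ σ : Equiv.Perm (Fin N),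
              (T σ - T (σ * Equiv.swap i j))^2 * T (σ * Equiv.swap i j) ^ (2*k) :=
            Finset.sum_congr rfl fun σ _ => by rw [Tf_sub α β σ i j]
        _ = ∑ σ : Equiv.Perm (Fin N), (T (σ * Equiv.swap i j) - T σ)^2 * T σ ^ (2*k) := h
        _ = ∑ σ : Equiv.Perm (Fin N), (D σ i j)^2 * T σ^(2*k) := by
            refine Finset.sum_congr rfl fun σ _ => ?_
            rw [show D σ i j = T σ - T (σ * Equiv.swap i j) from (Tf_sub α β σ i j).symm]
            ring
    have hTpow_nonneg : ∀ σ : Equiv.Perm (Fin N), (0:ℝ) ≤ T σ ^ (2*k) := by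
      intro σ
      rw [pow_mul]
      exact pow_nonneg (sq_nonneg _) k
    have B3 : 4*(N:ℝ)*∑ σ : Equiv.Perm (Fin N), T σ^(2*k+2) ≤
        (2*(k:ℝ)+1) * (2 * ∑ σ : Equiv.Perm (Fin N), ∑ i, ∑ j, (D σ i j)^2 * T σ^(2*k)) := by
      rw [← A3]
      calc ∑ σ : Equiv.Perm (Fin N), ∑ i, ∑ j,
            D σ i j * (T σ ^ (2*k+1) - T (σ * Equiv.swap i j) ^ (2*k+1))
          ≤ ∑ σ : Equiv.Perm (Fin N), ∑ i, ∑ j,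
            (2*(k:ℝ)+1) * ((D σ i j)^2 * (T σ^(2*k) + T (σ * Equiv.swap i j)^(2*k))) :=
            Finset.sum_le_sum fun σ _ => Finset.sum_le_sum fun i _ =>
              Finset.sum_le_sum fun j _ => hptw σ i j
        _ = (2*(k:ℝ)+1) * (∑ σ : Equiv.Perm (Fin N), ∑ i, ∑ j,
              ((D σ i j)^2 * T σ^(2*k) + (D σ i j)^2 * T (σ * Equiv.swap i j)^(2*k))) := by
            simp only [← mul_add, ← Finset.mul_sum]
        _ = (2*(k:ℝ)+1) * (∑ σ : Equiv.Perm (Fin N), ∑ i, ∑ j, (D σ i j)^2 * T σ^(2*k)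
              + ∑ σ : Equiv.Perm (Fin N), ∑ i, ∑ j, (D σ i j)^2 * T (σ * Equiv.swap i j)^(2*k)) := by
            simp only [Finset.sum_add_distrib]
        _ = (2*(k:ℝ)+1) * (2 * ∑ σ : Equiv.Perm (Fin N), ∑ i, ∑ j, (D σ i j)^2 * T σ^(2*k)) := by
            rw [B2]; ring
    have B4 : ∑ σ : Equiv.Perm (Fin N), ∑ i, ∑ j, (D σ i j)^2 * T σ^(2*k) ≤
        8*(N:ℝ)^2*CA^2*CB^2 * ∑ σ : Equiv.Perm (Fin N), T σ^(2*k) := by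
      rw [Finset.mul_sum]
      refine Finset.sum_le_sum fun σ _ => ?_
      calc ∑ i, ∑ j, (D σ i j)^2 * T σ^(2*k) = (∑ i, ∑ j, (D σ i j)^2) * T σ^(2*k) := by
            simp only [← Finset.sum_mul]
        _ ≤ 8*(N:ℝ)^2*CA^2*CB^2 * T σ^(2*k) :=
            mul_le_mul_of_nonneg_right (hD2 σ) (hTpow_nonneg σ)
    have final : 4*(N:ℝ)*∑ σ : Equiv.Perm (Fin N), T σ^(2*k+2) ≤
        4*(N:ℝ)*((4*(2*(k:ℝ)+1)*((N:ℝ)*CA^2*CB^2)) * ∑ σ : Equiv.Perm (Fin N), T σ ^ (2*k)) := by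
      calc 4*(N:ℝ)*∑ σ : Equiv.Perm (Fin N), T σ^(2*k+2)
          ≤ (2*(k:ℝ)+1) * (2 * ∑ σ : Equiv.Perm (Fin N), ∑ i, ∑ j, (D σ i j)^2 * T σ^(2*k)) := B3
        _ ≤ (2*(k:ℝ)+1) * (2 * (8*(N:ℝ)^2*CA^2*CB^2 * ∑ σ : Equiv.Perm (Fin N), T σ^(2*k))) := by
            apply mul_le_mul_of_nonneg_left _ (by positivity)
            apply mul_le_mul_of_nonneg_left B4 (by norm_num)
        _ = 4*(N:ℝ)*((4*(2*(k:ℝ)+1)*((N:ℝ)*CA^2*CB^2)) * ∑ σ : Equiv.Perm (Fin N), T σ ^ (2*k)) := by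
            ring
    exact le_of_mul_le_mul_left final (by positivity)
  -- induction
  induction k with
  | zero =>
    simp
  | succ k ih =>
    have hsum_nonneg : (0:ℝ) ≤ ∑ σ : Equiv.Perm (Fin N), T σ ^ (2*k) :=
      Finset.sum_nonneg fun σ _ => by rw [pow_mul]; exact pow_nonneg (sq_nonneg _) k
    have hMr0 : (0:ℝ) ≤ (Fintype.card (Equiv.Perm (Fin N)) : ℝ) := by positivity
    have step := key k
    have h1 : (8*(N:ℝ)*CA^2*CB^2*(k:ℝ))^k ≤ (8*(N:ℝ)*CA^2*CB^2*((k:ℝ)+1))^k := by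
      apply pow_le_pow_left₀ (by positivity)
      nlinarith [mul_nonneg (mul_nonneg (mul_nonneg (by norm_num : (0:ℝ) ≤ 8) hNr.le)
        (sq_nonneg CA)) (sq_nonneg CB)]
    calc ∑ σ : Equiv.Perm (Fin N), T σ ^ (2*(k+1))
        = ∑ σ : Equiv.Perm (Fin N), T σ ^ (2*k+2) := by norm_num [Nat.mul_succ]
      _ ≤ (4*(2*(k:ℝ)+1)*((N:ℝ)*CA^2*CB^2)) * ∑ σ : Equiv.Perm (Fin N), T σ ^ (2*k) := step
      _ ≤ (4*(2*(k:ℝ)+1)*((N:ℝ)*CA^2*CB^2)) *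
            ((8 * (N:ℝ) * CA^2 * CB^2 * (k:ℝ)) ^ k * (Fintype.card (Equiv.Perm (Fin N)) : ℝ)) := by
          apply mul_le_mul_of_nonneg_left ih (by positivity)
      _ ≤ (8*(N:ℝ)*CA^2*CB^2*((k:ℝ)+1)) *
            ((8 * (N:ℝ) * CA^2 * CB^2 * ((k:ℝ)+1)) ^ k * (Fintype.card (Equiv.Perm (Fin N)) : ℝ)) := by
          apply mul_le_mul _ (mul_le_mul_of_nonneg_right h1 hMr0) (by positivity) (by positivity)
          nlinarith [mul_nonneg (mul_nonneg hNr.le (sq_nonneg CA)) (sq_nonneg CB)]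
      _ = (8 * (N:ℝ) * CA^2 * CB^2 * ((k:ℕ)+1:ℝ)) ^ (k+1) * (Fintype.card (Equiv.Perm (Fin N)) : ℝ) := by
          rw [pow_succ]
          ring
      _ = (8 * (N:ℝ) * CA^2 * CB^2 * ((k+1:ℕ):ℝ)) ^ (k+1) * (Fintype.card (Equiv.Perm (Fin N)) : ℝ) := by
          push_cast
          ring

/-- Expectation with respect to the uniform probability measure on the permutation
group `Π_N` of `{1, ..., N}`. -/
noncomputable def EPi (N : ℕ) (g : Equiv.Perm (Fin N) → ℝ) : ℝ :=
  (∑ σ : Equiv.Perm (Fin N), g σ) / (Fintype.card (Equiv.Perm (Fin N)) : ℝ)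


set_option maxHeartbeats 2000000 in
theorem stmt18 (N : ℕ) (hN : 0 < N) (a b : Fin N → ℝ) (p : ℝ) (hp : 2 ≤ p) :
    (EPi N fun σ => |∑ i, a (σ i) * b i| ^ p) ^ (1 / p) ≤
        EPi N (fun σ => |∑ i, a (σ i) * b i|) + 4 * Real.sqrt p * Real.sqrt N * ‖a‖ * ‖b‖ ∧
      EPi N (fun σ => |∑ i, a (σ i) * b i|) + 4 * Real.sqrt p * Real.sqrt N * ‖a‖ * ‖b‖ ≤
        Real.sqrt (EPi N fun σ => |∑ i, a (σ i) * b i| ^ 2) +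
          4 * Real.sqrt p * Real.sqrt N * ‖a‖ * ‖b‖ := by
  have hNr : (0:ℝ) < N := by exact_mod_cast hN
  have hp0 : (0:ℝ) < p := by linarith
  have hp1 : (1:ℝ) ≤ p := by linarith
  set S : Equiv.Perm (Fin N) → ℝ := fun σ => ∑ i, a (σ i) * b i with hS
  set Mr : ℝ := (Fintype.card (Equiv.Perm (Fin N)) : ℝ) with hMrdef
  have hMr0 : (0:ℝ) < Mr := by
    rw [hMrdef]
    exact_mod_cast Fintype.card_pos
  set A : ℝ := ‖a‖ with hAdef
  set B : ℝ := ‖b‖ with hBdef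
  have hA0 : 0 ≤ A := norm_nonneg a
  have hB0 : 0 ≤ B := norm_nonneg b
  set abar : ℝ := (∑ i, a i)/N with habar
  set bbar : ℝ := (∑ i, b i)/N with hbbar
  set α : Fin N → ℝ := fun i => a i - abar with hα
  set β : Fin N → ℝ := fun i => b i - bbar with hβ
  set c : ℝ := (∑ i, a i) * (∑ i, b i) / N with hc
  -- basic facts
  have hα0 : ∑ i, α i = 0 := by
    simp only [hα, Finset.sum_sub_distrib, Finset.sum_const, Finset.card_univ,
      Fintype.card_fin, nsmul_eq_mul, habar]
    field_simp
    ring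
  have hβ0 : ∑ i, β i = 0 := by
    simp only [hβ, Finset.sum_sub_distrib, Finset.sum_const, Finset.card_univ,
      Fintype.card_fin, nsmul_eq_mul, hbbar]
    field_simp
    ring
  have hα2 : ∑ i, (α i)^2 ≤ N * A^2 := by
    have e : ∑ i, (α i)^2 = ∑ i, (a i)^2 - N * abar^2 := by
      have e2 : ∀ i, (α i)^2 = (a i)^2 - (2*abar)*a i + abar^2 := fun i => by
        simp only [hα]; ring
      simp only [e2]
      rw [Finset.sum_add_distrib, Finset.sum_sub_distrib, ← Finset.mul_sum,
        Finset.sum_const, Finset.card_univ, Fintype.card_fin, nsmul_eq_mul, habar]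
      field_simp
      ring
    have hsq : ∑ i, (a i)^2 ≤ N * A^2 := by
      calc ∑ i, (a i)^2 ≤ ∑ _i : Fin N, A^2 := by
            refine Finset.sum_le_sum fun i _ => ?_
            have h1 : |a i| ≤ A := by
              rw [hAdef, ← Real.norm_eq_abs]
              exact norm_le_pi_norm a i
            nlinarith [abs_nonneg (a i), sq_abs (a i)]
        _ = N * A^2 := by
            rw [Finset.sum_const, Finset.card_univ, Fintype.card_fin, nsmul_eq_mul]
    nlinarith [sq_nonneg abar]
  have hβd : ∀ i j, (β i - β j)^2 ≤ 4 * B^2 := by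
    intro i j
    have h1 : |b i| ≤ B := by
      rw [hBdef, ← Real.norm_eq_abs]; exact norm_le_pi_norm b i
    have h2 : |b j| ≤ B := by
      rw [hBdef, ← Real.norm_eq_abs]; exact norm_le_pi_norm b j
    have e : β i - β j = b i - b j := by simp only [hβ]; ring
    rw [e]
    have := abs_le.mp h1
    have := abs_le.mp h2
    nlinarith
  set T : Equiv.Perm (Fin N) → ℝ := Tf α β with hT
  have hST : ∀ σ, S σ = T σ + c := by
    intro σ
    have hsa : ∑ i, a (σ i) = ∑ i, a i := Equiv.sum_comp σ a
    have e : ∀ i, β i * α (σ i) =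
        a (σ i) * b i - bbar * a (σ i) - abar * b i + abar*bbar := fun i => by
      simp only [hα, hβ]; ring
    simp only [hT, Tf, e]
    rw [Finset.sum_add_distrib, Finset.sum_sub_distrib, Finset.sum_sub_distrib,
      ← Finset.mul_sum, ← Finset.mul_sum, hsa, Finset.sum_const, Finset.card_univ,
      Fintype.card_fin, nsmul_eq_mul, habar, hbbar, hS, hc]
    field_simp
    ring
  -- mean of S is c
  have hzeroα : ∀ i : Fin N, ∑ σ : Equiv.Perm (Fin N), α (σ i) = 0 := by
    have hvconst : ∀ i j : Fin N, ∑ σ : Equiv.Perm (Fin N), α (σ i) =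
        ∑ σ : Equiv.Perm (Fin N), α (σ j) := by
      intro i j
      have h := sum_perm_mul_right (Equiv.swap i j) (fun σ => α (σ i))
      calc ∑ σ : Equiv.Perm (Fin N), α (σ i)
          = ∑ σ : Equiv.Perm (Fin N), α ((σ * Equiv.swap i j) i) := h.symm
        _ = ∑ σ : Equiv.Perm (Fin N), α (σ j) := by
            refine Finset.sum_congr rfl fun σ _ => ?_
            rw [Equiv.Perm.mul_apply, Equiv.swap_apply_left]
    intro i
    have hsum : ∑ j, ∑ σ : Equiv.Perm (Fin N), α (σ j) = 0 := by
      rw [Finset.sum_comm]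
      calc ∑ σ : Equiv.Perm (Fin N), ∑ j, α (σ j)
          = ∑ σ : Equiv.Perm (Fin N), (0:ℝ) :=
            Finset.sum_congr rfl fun σ _ => (Equiv.sum_comp σ α).trans hα0
        _ = 0 := Finset.sum_const_zero
    have hcc : ∑ j, ∑ σ : Equiv.Perm (Fin N), α (σ j)
        = N * ∑ σ : Equiv.Perm (Fin N), α (σ i) := by
      rw [Finset.sum_congr rfl (fun j _ => hvconst j i), Finset.sum_const,
        Finset.card_univ, Fintype.card_fin, nsmul_eq_mul]
    rw [hcc] at hsum
    have := mul_eq_zero.mp hsum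
    rcases this with h | h
    · exact absurd h (by positivity)
    · exact h
  have hT0 : ∑ σ : Equiv.Perm (Fin N), T σ = 0 := by
    simp only [hT, Tf]
    rw [Finset.sum_comm]
    calc ∑ i, ∑ σ : Equiv.Perm (Fin N), β i * α (σ i)
        = ∑ i, β i * ∑ σ : Equiv.Perm (Fin N), α (σ i) := by
          refine Finset.sum_congr rfl fun i _ => ?_
          rw [Finset.mul_sum]
      _ = 0 := by
          simp only [hzeroα, mul_zero, Finset.sum_const_zero]
  have hSsum : ∑ σ : Equiv.Perm (Fin N), S σ = Mr * c := by
    calc ∑ σ : Equiv.Perm (Fin N), S σ = ∑ σ : Equiv.Perm (Fin N), (T σ + c) :=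
          Finset.sum_congr rfl fun σ _ => hST σ
      _ = 0 + Mr * c := by
          rw [Finset.sum_add_distrib, hT0, Finset.sum_const, Finset.card_univ, nsmul_eq_mul]
      _ = Mr * c := by ring
  have hc_le : |c| ≤ EPi N (fun σ => |S σ|) := by
    have h1 : |c| = |∑ σ : Equiv.Perm (Fin N), S σ| / Mr := by
      rw [hSsum, abs_mul, abs_of_pos hMr0]
      field_simp
    rw [h1]
    unfold EPi
    rw [← hMrdef]
    exact (div_le_div_iff_of_pos_right hMr0).mpr (Finset.abs_sum_le_sum_abs _ _)
  -- choice of k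
  set k : ℕ := ⌈p/2⌉₊ with hk
  have hk1 : 1 ≤ k := Nat.one_le_iff_ne_zero.mpr (by
    rw [hk]
    exact Nat.ceil_pos.mpr (by linarith) |>.ne')
  have hkp : p ≤ 2*(k:ℝ) := by
    have := Nat.le_ceil (p/2)
    rw [← hk] at this
    linarith
  have hk_up : (k:ℝ) < p/2 + 1 := by
    rw [hk]
    exact Nat.ceil_lt_add_one (by linarith)
  have hmom := moment_bound hN α β A B hA0 hB0 hα0 hβ0 hα2 hβd k
  rw [← hT, ← hMrdef] at hmom
  -- the moment quantity
  set W : ℝ := 8 * (N:ℝ) * A^2 * B^2 * (k:ℝ) with hW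
  have hW0 : 0 ≤ W := by rw [hW]; positivity
  set R : ℝ := 4 * Real.sqrt p * Real.sqrt N * A * B with hR
  have hR0 : 0 ≤ R := by rw [hR]; positivity
  have hWR : Real.sqrt W ≤ R := by
    have hRsq : R^2 = 16*p*(N:ℝ)*A^2*B^2 := by
      rw [hR, show (4 * Real.sqrt p * Real.sqrt N * A * B)^2
        = 16*(Real.sqrt p^2)*(Real.sqrt N^2)*A^2*B^2 from by ring,
        Real.sq_sqrt hp0.le, Real.sq_sqrt hNr.le]
    have h8 : 8*(k:ℝ) ≤ 16*p := by nlinarith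
    have hWle : W ≤ R^2 := by
      rw [hRsq, hW]
      have hnn : (0:ℝ) ≤ (N:ℝ)*A^2*B^2 := by positivity
      nlinarith [mul_le_mul_of_nonneg_right h8 hnn]
    calc Real.sqrt W ≤ Real.sqrt (R^2) := Real.sqrt_le_sqrt hWle
      _ = R := Real.sqrt_sq hR0
  -- T-moment in Lp
  have hE2 : (∑ σ : Equiv.Perm (Fin N), T σ ^ (2*k)) / Mr ≤ W^k := by
    rw [div_le_iff₀ hMr0]
    exact hmom
  have hE2nonneg : 0 ≤ (∑ σ : Equiv.Perm (Fin N), T σ ^ (2*k)) / Mr := by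
    apply div_nonneg _ hMr0.le
    exact Finset.sum_nonneg fun σ _ => by
      rw [pow_mul]; exact pow_nonneg (sq_nonneg _) k
  set E2 : ℝ := (∑ σ : Equiv.Perm (Fin N), T σ ^ (2*k)) / Mr with hE2def
  set E1 : ℝ := (∑ σ : Equiv.Perm (Fin N), |T σ| ^ p) / Mr with hE1def
  have hE1nonneg : 0 ≤ E1 := by
    apply div_nonneg _ hMr0.le
    exact Finset.sum_nonneg fun σ _ => Real.rpow_nonneg (abs_nonneg _) p
  have hKpos : (0:ℝ) < 2*(k:ℝ) := by positivity
  -- Jensen: E1 ^ ((2k)/p) ≤ E2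
  have hq1 : (1:ℝ) ≤ (2*(k:ℝ))/p := (one_le_div hp0).mpr hkp
  have jensen : E1 ^ ((2*(k:ℝ))/p) ≤ E2 := by
    have hmean := Real.rpow_arith_mean_le_arith_mean_rpow Finset.univ
      (fun _ : Equiv.Perm (Fin N) => 1/Mr) (fun σ => |T σ| ^ p)
      (fun i _ => by positivity)
      (by rw [Finset.sum_const, Finset.card_univ, nsmul_eq_mul, ← hMrdef]; field_simp)
      (fun i _ => Real.rpow_nonneg (abs_nonneg _) p) hq1
    have e1 : ∑ σ : Equiv.Perm (Fin N), (1/Mr) * |T σ| ^ p = E1 := by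
      rw [hE1def, ← Finset.mul_sum]
      ring
    have e2 : ∑ σ : Equiv.Perm (Fin N), (1/Mr) * (|T σ| ^ p) ^ ((2*(k:ℝ))/p) = E2 := by
      have hterm : ∀ σ : Equiv.Perm (Fin N),
          (|T σ| ^ p) ^ ((2*(k:ℝ))/p) = T σ ^ (2*k) := by
        intro σ
        rw [← Real.rpow_mul (abs_nonneg _)]
        have hpq : p * ((2*(k:ℝ))/p) = ((2*k : ℕ):ℝ) := by
          push_cast
          field_simp
        rw [hpq, Real.rpow_natCast, pow_mul, pow_mul, sq_abs]
      simp only [hterm]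
      rw [hE2def, ← Finset.mul_sum]
      ring
    rw [e1, e2] at hmean
    exact hmean
  have j2 : E1 ^ (1/p) ≤ E2 ^ (1/(2*(k:ℝ))) := by
    have hq0 : (0:ℝ) ≤ (2*(k:ℝ))/p := by positivity
    have step : (E1 ^ ((2*(k:ℝ))/p)) ^ (1/(2*(k:ℝ))) ≤ E2 ^ (1/(2*(k:ℝ))) :=
      Real.rpow_le_rpow (Real.rpow_nonneg hE1nonneg _) jensen (by positivity)
    have eq1 : (E1 ^ ((2*(k:ℝ))/p)) ^ (1/(2*(k:ℝ))) = E1 ^ (1/p) := by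
      rw [← Real.rpow_mul hE1nonneg]
      congr 1
      have hk0 : (k:ℝ) ≠ 0 := by positivity
      field_simp
    rw [← eq1]
    exact step
  -- E2^(1/(2k)) ≤ R
  have j3 : E2 ^ (1/(2*(k:ℝ))) ≤ R := by
    have step : E2 ^ (1/(2*(k:ℝ))) ≤ (W^k) ^ (1/(2*(k:ℝ))) :=
      Real.rpow_le_rpow hE2nonneg hE2 (by positivity)
    have eq1 : (W^k) ^ (1/(2*(k:ℝ))) = W ^ (1/2 : ℝ) := by
      rw [← Real.rpow_natCast W k, ← Real.rpow_mul hW0]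
      congr 1
      have hk0 : (k:ℝ) ≠ 0 := by positivity
      field_simp
    rw [eq1] at step
    rw [← Real.sqrt_eq_rpow] at step
    exact step.trans hWR
  -- Minkowski
  have hSeq : (fun σ : Equiv.Perm (Fin N) => |S σ| ^ p) = fun σ => |T σ + c| ^ p := by
    funext σ
    rw [hST σ]
  have mink : (∑ σ : Equiv.Perm (Fin N), |S σ|^p)^(1/p) ≤
      (∑ σ : Equiv.Perm (Fin N), |T σ|^p)^(1/p) + Mr^(1/p) * |c| := by
    have hmk := Real.Lp_add_le Finset.univ T (fun _ => c) hp1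
    have hconst : (∑ _σ : Equiv.Perm (Fin N), |c|^p)^(1/p) = Mr^(1/p) * |c| := by
      rw [Finset.sum_const, Finset.card_univ, nsmul_eq_mul, ← hMrdef,
        Real.mul_rpow hMr0.le (Real.rpow_nonneg (abs_nonneg c) p)]
      congr 1
      rw [one_div, Real.rpow_rpow_inv (abs_nonneg c) hp0.ne']
    calc (∑ σ : Equiv.Perm (Fin N), |S σ|^p)^(1/p)
        = (∑ σ : Equiv.Perm (Fin N), |T σ + c|^p)^(1/p) := by rw [hSeq]
      _ ≤ (∑ σ : Equiv.Perm (Fin N), |T σ|^p)^(1/p)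
            + (∑ _σ : Equiv.Perm (Fin N), |c|^p)^(1/p) := hmk
      _ = (∑ σ : Equiv.Perm (Fin N), |T σ|^p)^(1/p) + Mr^(1/p) * |c| := by rw [hconst]
  -- first inequality
  have goal1 : (EPi N fun σ => |S σ| ^ p) ^ (1 / p) ≤ EPi N (fun σ => |S σ|) + R := by
    have hMp0 : (0:ℝ) < Mr^(1/p) := Real.rpow_pos_of_pos hMr0 _
    have hsum_nonneg : 0 ≤ ∑ σ : Equiv.Perm (Fin N), |S σ|^p :=
      Finset.sum_nonneg fun σ _ => Real.rpow_nonneg (abs_nonneg _) p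
    have e0 : (EPi N fun σ => |S σ| ^ p) ^ (1 / p)
        = (∑ σ : Equiv.Perm (Fin N), |S σ|^p)^(1/p) / Mr^(1/p) := by
      unfold EPi
      rw [← hMrdef, Real.div_rpow hsum_nonneg hMr0.le]
    have e1' : E1 ^ (1/p) = (∑ σ : Equiv.Perm (Fin N), |T σ|^p)^(1/p) / Mr^(1/p) := by
      rw [hE1def, Real.div_rpow (Finset.sum_nonneg fun σ _ =>
        Real.rpow_nonneg (abs_nonneg _) p) hMr0.le]
    calc (EPi N fun σ => |S σ| ^ p) ^ (1 / p)
        = (∑ σ : Equiv.Perm (Fin N), |S σ|^p)^(1/p) / Mr^(1/p) := e0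
      _ ≤ ((∑ σ : Equiv.Perm (Fin N), |T σ|^p)^(1/p) + Mr^(1/p) * |c|) / Mr^(1/p) := by
          exact (div_le_div_iff_of_pos_right hMp0).mpr mink
      _ = E1 ^ (1/p) + |c| := by
          rw [e1']
          field_simp
      _ ≤ R + |c| := by
          have := (j2.trans j3)
          linarith
      _ ≤ EPi N (fun σ => |S σ|) + R := by
          linarith [hc_le]
  -- second inequality
  have goal2 : EPi N (fun σ => |S σ|) ≤ Real.sqrt (EPi N fun σ => |S σ| ^ 2) := by
    have hE0 : 0 ≤ EPi N (fun σ => |S σ|) := by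
      unfold EPi
      apply div_nonneg (Finset.sum_nonneg fun σ _ => abs_nonneg _) (by positivity)
    have hCS : (∑ σ : Equiv.Perm (Fin N), |S σ|) ^ 2 ≤
        (∑ σ : Equiv.Perm (Fin N), |S σ|^2) * Mr := by
      have h := Finset.sum_mul_sq_le_sq_mul_sq Finset.univ
        (fun σ : Equiv.Perm (Fin N) => |S σ|) (fun _ => (1:ℝ))
      simp only [mul_one, one_pow] at h
      calc (∑ σ : Equiv.Perm (Fin N), |S σ|) ^ 2
          ≤ (∑ σ : Equiv.Perm (Fin N), |S σ|^2) * (∑ _σ : Equiv.Perm (Fin N), (1:ℝ)) := h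
        _ = (∑ σ : Equiv.Perm (Fin N), |S σ|^2) * Mr := by
            rw [Finset.sum_const, Finset.card_univ, nsmul_eq_mul, mul_one, ← hMrdef]
    rw [show EPi N (fun σ => |S σ|) = Real.sqrt ((EPi N (fun σ => |S σ|))^2) from
      (Real.sqrt_sq hE0).symm]
    apply Real.sqrt_le_sqrt
    unfold EPi
    rw [← hMrdef, div_pow, div_le_div_iff₀ (by positivity) hMr0]
    calc (∑ σ : Equiv.Perm (Fin N), |S σ|)^2 * Mr
        ≤ ((∑ σ : Equiv.Perm (Fin N), |S σ|^2) * Mr) * Mr := by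
          nlinarith [hMr0]
      _ = (∑ σ : Equiv.Perm (Fin N), |S σ|^2) * Mr^2 := by ring
  exact ⟨goal1, add_le_add_left goal2 _⟩
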